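/- arXiv:0905.3197 — 2 statements merged into one kernel-verified Lean document; each statement's English description precedes it below -/
import Mathlib

section
/- For any weighted graph G, any positive integers s and t, and any vertex x_i ∈ V(G), one has π_{st}(G, x_i) = π_t(G_{i,s}', x'), where G_{i,s}' is obtained from G by adding a new vertex x' joined to x_i by a single edge of weight s. -/
open scoped BigOperators

/-- A weighted graph: a finite simple graph together with a symmetric weight
function assigning a positive integer to each edge. -/
structure WeightedGraph (V : Type*) where
  toSimpleGraph : SimpleGraph V
  w : V → V → ℕ
  w_symm : ∀ u v, w u v = w v u
  w_pos : ∀ u v, toSimpleGraph.Adj u v → 0 < w u v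

/-- A weighted pebbling move along the edge `(u, v)`: remove `w u v` pebbles
from `u` and add one pebble on the adjacent vertex `v`. -/
def WPebMove {V : Type*} [DecidableEq V] (G : WeightedGraph V) (D D' : V → ℕ) : Prop :=
  ∃ u v, G.toSimpleGraph.Adj u v ∧ G.w u v ≤ D u ∧
    D' = fun z => if z = u then D u - G.w u v else if z = v then D v + 1 else D z

/-- `D'` is reachable from `D` in the weighted graph `G`: some sequence of
weighted pebbling moves starting at `D` produces a distribution containing `D'`. -/
def WReaches {V : Type*} [DecidableEq V] (G : WeightedGraph V) (D D' : V → ℕ) : Prop :=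
  ∃ D'', Relation.ReflTransGen (WPebMove G) D D'' ∧ ∀ v, D' v ≤ D'' v

/-- Total number of pebbles of a distribution. -/
def pebTotal {V : Type*} [Fintype V] (D : V → ℕ) : ℕ := ∑ v, D v

/-- The weighted pebbling number of a set `S` of target distributions. -/
noncomputable def wpebSet {V : Type*} [Fintype V] [DecidableEq V] (G : WeightedGraph V)
    (S : Set (V → ℕ)) : ℕ∞ :=
  sInf {N : ℕ∞ | ∀ D₀ : V → ℕ, N ≤ (pebTotal D₀ : ℕ∞) → ∀ D ∈ S, WReaches G D₀ D}

/-- The weighted pebbling number of a single target distribution. -/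
noncomputable def wpeb {V : Type*} [Fintype V] [DecidableEq V] (G : WeightedGraph V)
    (D : V → ℕ) : ℕ∞ :=
  wpebSet G {D}

/-- The distribution with `t` pebbles on `v` and none elsewhere. -/
def unitDist {V : Type*} [DecidableEq V] (t : ℕ) (v : V) : V → ℕ :=
  fun w => if w = v then t else 0

/-- The weighted graph `G_{i,s}'` obtained from `G` by adding a single new
vertex `none` joined to `xᵢ` by a single edge of weight `s`. -/
def WeightedGraph.extend {V : Type*} (G : WeightedGraph V) (xi : V)
    (s : ℕ) (hs : 0 < s) : WeightedGraph (Option V) where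
  toSimpleGraph :=
    { Adj := fun a b =>
        (∃ u v, a = some u ∧ b = some v ∧ G.toSimpleGraph.Adj u v) ∨
        (a = some xi ∧ b = none) ∨ (a = none ∧ b = some xi)
      symm := by
        refine ⟨?_⟩; rintro a b (⟨u, v, rfl, rfl, h⟩ | ⟨rfl, rfl⟩ | ⟨rfl, rfl⟩)
        · exact Or.inl ⟨v, u, rfl, rfl, h.symm⟩
        · exact Or.inr (Or.inr ⟨rfl, rfl⟩)
        · exact Or.inr (Or.inl ⟨rfl, rfl⟩)
      loopless := by
        refine ⟨?_⟩; rintro a (⟨u, v, rfl, h1, hadj⟩ | ⟨h1, h2⟩ | ⟨h1, h2⟩) <;> simp_all }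
  w := fun a b => match a, b with
    | some u, some v => G.w u v
    | _, _ => s
  w_symm := by
    rintro (_ | u) (_ | v) <;> simp [G.w_symm]
  w_pos := by
    rintro a b (⟨u, v, rfl, rfl, hadj⟩ | ⟨rfl, rfl⟩ | ⟨rfl, rfl⟩)
    · exact G.w_pos u v hadj
    · exact hs
    · exact hs

/-- The map `π` sending a distribution on `G_{i,s}' × H` to a distribution on
`G × H`, replacing each pebble on `(x', y)` by `s` pebbles on `(xᵢ, y)`. -/
def wprojDist {V W : Type*} [DecidableEq V] (xi : V) (s : ℕ)
    (D : Option V × W → ℕ) : V × W → ℕ :=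
  fun p =>
    if p.1 = xi then D (some p.1, p.2) + s * D (none, p.2) else D (some p.1, p.2)

section Aux
variable {V : Type*} [Fintype V] [DecidableEq V] (G : WeightedGraph V)

lemma sum_split_two (u v : V) (huv : u ≠ v) (g : V → ℕ) :
    ∑ z, g z = g u + g v + ∑ z ∈ (Finset.univ.erase u).erase v, g z := by
  rw [← Finset.add_sum_erase _ g (Finset.mem_univ u),
      ← Finset.add_sum_erase _ g (Finset.mem_erase.mpr ⟨huv.symm, Finset.mem_univ v⟩)]
  ring

lemma move_sim {C' M' C F : V → ℕ} (h : WPebMove G C' M')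
    (hle : ∀ v, C' v ≤ C v + F v) :
    ∃ M Fm, Relation.ReflTransGen (WPebMove G) C M ∧ (∀ v, M' v ≤ M v + Fm v) ∧
      pebTotal Fm ≤ pebTotal F := by
  obtain ⟨u, v, hadj, hw, rfl⟩ := h
  have huv : u ≠ v := hadj.ne
  by_cases hcu : G.w u v ≤ C u
  · refine ⟨_, F, Relation.ReflTransGen.single ⟨u, v, hadj, hcu, rfl⟩, ?_, le_rfl⟩
    intro z
    have h1 := hle u; have h2 := hle z
    by_cases hz : z = u
    · subst hz; simp only [if_true, eq_self_iff_true, if_pos]; omega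
    · by_cases hz2 : z = v
      · subst hz2; simp only [if_neg hz, if_true, eq_self_iff_true, if_pos]; omega
      · simp only [if_neg hz, if_neg hz2]; omega
  · push_neg at hcu
    refine ⟨C, fun z => if z = u then F u - (G.w u v - C u) else if z = v then F v + 1 else F z,
      Relation.ReflTransGen.refl, ?_, ?_⟩
    · intro z
      have h1 := hle u; have h2 := hle z
      by_cases hz : z = u
      · subst hz; simp only [if_true, eq_self_iff_true, if_pos]; omega
      · by_cases hz2 : z = v
        · subst hz2; simp only [if_neg hz, if_true, eq_self_iff_true, if_pos]; omega
        · simp only [if_neg hz, if_neg hz2]; omega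
    · unfold pebTotal
      rw [sum_split_two u v huv, sum_split_two u v huv F]
      have hcong : ∑ z ∈ (Finset.univ.erase u).erase v,
          (if z = u then F u - (G.w u v - C u) else if z = v then F v + 1 else F z)
          = ∑ z ∈ (Finset.univ.erase u).erase v, F z := by
        apply Finset.sum_congr rfl
        intro z hz
        simp only [Finset.mem_erase] at hz
        simp [hz.1, hz.2.1]
      rw [hcong]
      have h1 := hle u
      simp only [if_neg (huv.symm : v ≠ u), if_true, eq_self_iff_true, if_pos]
      omega

lemma deficit {C' E' : V → ℕ} (h : Relation.ReflTransGen (WPebMove G) C' E') :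
    ∀ {C F : V → ℕ}, (∀ v, C' v ≤ C v + F v) →
    ∃ E F', Relation.ReflTransGen (WPebMove G) C E ∧ (∀ v, E' v ≤ E v + F' v) ∧
      pebTotal F' ≤ pebTotal F := by
  induction h using Relation.ReflTransGen.head_induction_on with
  | refl => intro C F hle; exact ⟨C, F, Relation.ReflTransGen.refl, hle, le_rfl⟩
  | head hstep _ ih =>
    intro C F hle
    obtain ⟨M, Fm, hM, hMle, hFm⟩ := move_sim G hstep hle
    obtain ⟨E, F', hE, hEle, hF'⟩ := ih hMle
    exact ⟨E, F', hM.trans hE, hEle, hF'.trans hFm⟩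

lemma rtg_mono {C' E' C : V → ℕ} (h : Relation.ReflTransGen (WPebMove G) C' E')
    (hle : ∀ v, C' v ≤ C v) :
    ∃ E, Relation.ReflTransGen (WPebMove G) C E ∧ ∀ v, E' v ≤ E v := by
  obtain ⟨E, F', hE, hEle, hF'⟩ :=
    deficit G h (C := C) (F := fun _ => 0) (fun v => by simpa using hle v)
  have hz : pebTotal F' = 0 := by
    have : pebTotal (fun _ : V => 0) = 0 := by simp [pebTotal]
    omega
  have hF0 : ∀ v, F' v = 0 := fun v =>
    Finset.sum_eq_zero_iff.mp hz v (Finset.mem_univ v)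
  exact ⟨E, hE, fun v => by have := hEle v; rw [hF0 v] at this; omega⟩

end Aux

section Proj
variable {V : Type*} [Fintype V] [DecidableEq V] (G : WeightedGraph V) (xi : V) (s : ℕ)

/-- Projection: each pebble on the new vertex becomes `s` pebbles on `xi`. -/
def projD (D : Option V → ℕ) : V → ℕ :=
  fun v => D (some v) + (if v = xi then s * D none else 0)

/-- Embedding of a distribution on `V` with `k` pebbles on the new vertex. -/
def embD (k : ℕ) (D : V → ℕ) : Option V → ℕ :=
  fun z => match z with | none => k | some v => D v

lemma proj_move (hs : 0 < s) {A B : Option V → ℕ}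
    (h : WPebMove (G.extend xi s hs) A B) :
    (∀ v, projD xi s B v ≤ projD xi s A v) ∨
      WPebMove G (projD xi s A) (projD xi s B) := by
  obtain ⟨u, v, hadj, hw, rfl⟩ := h
  have hadj' : (∃ a b, u = some a ∧ v = some b ∧ G.toSimpleGraph.Adj a b) ∨
      (u = some xi ∧ v = none) ∨ (u = none ∧ v = some xi) := hadj
  obtain ⟨a, b, rfl, rfl, hab⟩ | ⟨rfl, rfl⟩ | ⟨rfl, rfl⟩ := hadj'
  · right
    have hab' : a ≠ b := hab.ne
    have hwab : (G.extend xi s hs).w (some a) (some b) = G.w a b := rfl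
    rw [hwab] at hw
    refine ⟨a, b, hab, ?_, ?_⟩
    · simp only [projD]
      exact le_trans hw (Nat.le_add_right _ _)
    · funext z
      simp only [projD, hwab, Option.some.injEq, reduceCtorEq, if_false]
      set P := s * A none with hP
      split_ifs <;> subst_vars <;>
        first | omega | (exact absurd rfl hab') | simp_all
  · left
    intro z
    have hwx : (G.extend xi s hs).w (some xi) none = s := rfl
    rw [hwx] at hw
    simp only [projD, hwx, Option.some.injEq, reduceCtorEq, if_false, eq_self_iff_true, if_true, ite_true, ite_false]
    rw [Nat.mul_succ]
    set P := s * A none with hP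
    split_ifs with h1 <;> try subst h1
    all_goals omega
  · left
    intro z
    have hwx : (G.extend xi s hs).w none (some xi) = s := rfl
    rw [hwx] at hw
    simp only [projD, hwx, Option.some.injEq, reduceCtorEq, if_false, eq_self_iff_true, if_true, ite_true, ite_false]
    obtain ⟨c, hc⟩ := Nat.exists_eq_add_of_le hw
    have h3 : s * (A none - s) = s * c := by rw [hc]; congr 1; omega
    have h4 : s * A none = s * s + s * c := by rw [hc, Nat.mul_add]
    have h5 : 0 < s * s := Nat.mul_pos hs hs
    rw [h3, h4]
    split_ifs with h1 <;> try subst h1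
    all_goals linarith

lemma proj_rtg (hs : 0 < s) {A B : Option V → ℕ}
    (h : Relation.ReflTransGen (WPebMove (G.extend xi s hs)) A B) :
    ∃ C, Relation.ReflTransGen (WPebMove G) (projD xi s A) C ∧
      ∀ z, projD xi s B z ≤ C z := by
  induction h with
  | refl => exact ⟨_, Relation.ReflTransGen.refl, fun z => le_rfl⟩
  | tail _ hstep ih =>
    obtain ⟨C, hC, hle⟩ := ih
    rcases proj_move G xi s hs hstep with hmono | hmove
    · exact ⟨C, hC, fun z => (hmono z).trans (hle z)⟩
    · obtain ⟨E, hE, hEle⟩ := rtg_mono G (Relation.ReflTransGen.single hmove) hle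
      exact ⟨E, hC.trans hE, hEle⟩

lemma emb_move (hs : 0 < s) (k : ℕ) {A B : V → ℕ} (h : WPebMove G A B) :
    WPebMove (G.extend xi s hs) (embD k A) (embD k B) := by
  obtain ⟨u, v, hadj, hw, rfl⟩ := h
  refine ⟨some u, some v, Or.inl ⟨u, v, rfl, rfl, hadj⟩, hw, ?_⟩
  funext z
  match z with
  | none => simp [embD]
  | some z => simp only [embD, Option.some.injEq,
      show (G.extend xi s hs).w (some u) (some v) = G.w u v from rfl]

lemma emb_rtg (hs : 0 < s) (k : ℕ) {A B : V → ℕ}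
    (h : Relation.ReflTransGen (WPebMove G) A B) :
    Relation.ReflTransGen (WPebMove (G.extend xi s hs)) (embD k A) (embD k B) :=
  h.lift (embD k) (fun _ _ hab => emb_move G xi s hs k hab)

lemma pump (hs : 0 < s) : ∀ (m : ℕ) (C : Option V → ℕ), s * m ≤ C (some xi) →
    ∃ C', Relation.ReflTransGen (WPebMove (G.extend xi s hs)) C C' ∧
      C none + m ≤ C' none := by
  intro m
  induction m with
  | zero => exact fun C _ => ⟨C, Relation.ReflTransGen.refl, le_rfl⟩
  | succ m ih =>
    intro C hC
    have hws : (G.extend xi s hs).w (some xi) none = s := rfl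
    have hsle : s ≤ C (some xi) := le_trans (by nlinarith) hC
    set C₁ : Option V → ℕ := fun z => if z = some xi then C (some xi) - (G.extend xi s hs).w (some xi) none
        else if z = none then C none + 1 else C z with hC₁
    have hmove : WPebMove (G.extend xi s hs) C C₁ :=
      ⟨some xi, none, Or.inr (Or.inl ⟨rfl, rfl⟩), by rw [hws]; exact hsle, rfl⟩
    have h1 : C₁ (some xi) = C (some xi) - s := by simp [hC₁, hws]
    have h2 : C₁ none = C none + 1 := by simp [hC₁]
    have hsm : s * m ≤ C₁ (some xi) := by
      rw [h1]
      have : s * (m + 1) = s * m + s := Nat.mul_succ s m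
      omega
    obtain ⟨C', hC', hle⟩ := ih C₁ hsm
    exact ⟨C', Relation.ReflTransGen.head hmove hC', by omega⟩

lemma pebTotal_embD (k : ℕ) (D : V → ℕ) :
    pebTotal (embD (V := V) k D) = k + pebTotal D := by
  simp [pebTotal, embD, Fintype.sum_option]

lemma projD_embD_zero (D : V → ℕ) : projD xi s (embD 0 D) = D := by
  funext v
  simp [projD, embD]

end Proj

/-- `π_{st}(G, xᵢ) = π_t(G_{i,s}', x')` for weighted graphs. -/
theorem weighted_st_pebbling_eq_extended {V : Type*} [Fintype V] [DecidableEq V]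
    (G : WeightedGraph V) (s t : ℕ) (hs : 0 < s) (ht : 0 < t) (xi : V) :
    wpeb G (unitDist (s * t) xi)
      = wpeb (G.extend xi s hs) (unitDist t (none : Option V)) := by
  unfold wpeb wpebSet
  congr 1
  ext N
  simp only [Set.mem_setOf_eq, Set.mem_singleton_iff, forall_eq]
  constructor
  · -- from `G` to the extended graph
    intro hN D₀' hle
    set k := D₀' none with hk
    by_cases hkt : t ≤ k
    · refine ⟨D₀', Relation.ReflTransGen.refl, fun v => ?_⟩
      cases v with
      | none => simp only [unitDist]; simpa using hkt
      | some v => simp [unitDist]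
    · push_neg at hkt
      set R : V → ℕ := fun v => D₀' (some v) with hR
      set D₀ : V → ℕ := fun v => R v + (if v = xi then k else 0) with hD₀
      have h1 : pebTotal D₀ = pebTotal R + k := by
        simp only [pebTotal, hD₀, Finset.sum_add_distrib]
        congr 1
        simp
      have h2 : pebTotal D₀' = k + pebTotal R := by
        simp only [pebTotal]
        rw [Fintype.sum_option]
      have htot : pebTotal D₀ = pebTotal D₀' := by omega
      obtain ⟨E, hE, hEc⟩ := hN D₀ (by rw [htot]; exact hle)
      have hEx : s * t ≤ E xi := by simpa [unitDist] using hEc xi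
      obtain ⟨E₂, F', hE₂, hle2, hF'⟩ := deficit G hE
        (C := R) (F := fun v => if v = xi then k else 0) (fun v => le_rfl)
      have hFtot : pebTotal (fun v : V => if v = xi then k else 0) = k := by
        simp [pebTotal]
      have hF'xi : F' xi ≤ k := by
        have := Finset.single_le_sum (f := F') (fun i _ => Nat.zero_le _)
          (Finset.mem_univ xi)
        have h3 : pebTotal F' = ∑ v, F' v := rfl
        omega
      have hE2 := hle2 xi
      obtain ⟨m, hm⟩ := Nat.exists_eq_add_of_le (le_of_lt hkt)
      have hsm : s * m ≤ E₂ xi := by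
        have h5 : k ≤ s * k := by
          calc k = 1 * k := (one_mul k).symm
          _ ≤ s * k := Nat.mul_le_mul_right k hs
        have h6 : s * t = s * k + s * m := by rw [hm, Nat.mul_add]
        linarith
      have hlift := emb_rtg G xi s hs k hE₂
      have hstart : embD (V := V) k R = D₀' := by
        funext z
        cases z <;> simp [embD, hk, hR]
      obtain ⟨C', hC', hcnt⟩ := pump G xi s hs m (embD k E₂) hsm
      refine ⟨C', ?_, fun v => ?_⟩
      · rw [← hstart]
        exact hlift.trans hC'
      · cases v with
        | none =>
          have h9 : embD (V := V) k E₂ none = k := rfl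
          have h10 : unitDist t (none : Option V) none = t := by simp [unitDist]
          rw [h10]
          omega
        | some v => simp [unitDist]
  · -- from the extended graph to `G`
    intro hN D₀ hle
    have htot : pebTotal (embD (V := V) 0 D₀) = pebTotal D₀ := by
      rw [pebTotal_embD]; omega
    obtain ⟨D'', hD'', hc⟩ := hN (embD 0 D₀) (by rw [htot]; exact hle)
    have hct : t ≤ D'' none := by simpa [unitDist] using hc none
    obtain ⟨C, hC, hle2⟩ := proj_rtg G xi s hs hD''
    rw [projD_embD_zero] at hC
    refine ⟨C, hC, fun v => ?_⟩
    by_cases hv : v = xi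
    · have h6 := hle2 v
      have h7 : s * t ≤ s * D'' none := Nat.mul_le_mul_left s hct
      have h8 : projD xi s D'' v = D'' (some v) + s * D'' none := by
        simp [projD, hv]
      have h9 : unitDist (s * t) xi v = s * t := by simp [unitDist, hv]
      rw [h9]
      rw [h8] at h6
      linarith
    · simp [unitDist, hv]
end

section
/- For every integer k ≥ 1, on the path P_{4k+2} with endpoints x_1 and x_{4k+2} one has ρ(P_{4k+2}, {2·δ_{x_1}, 2·δ_{x_{4k+2}}}) = (2^{2k+3} + 1)/3 and 2·ρ(P_{4k+2}, {δ_{x_1}, δ_{x_{4k+2}}}) = (2^{2k+3} − 2)/3; in particular ρ(P_{4k+2}, {2·δ_{x_1}, 2·δ_{x_{4k+2}}}) > 2·ρ(P_{4k+2}, {δ_{x_1}, δ_{x_{4k+2}}}). -/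
open scoped BigOperators

/-- A single pebbling move on a simple graph: remove two pebbles from `u`
and add one pebble on an adjacent vertex `v`. -/
def PebMove {V : Type*} [DecidableEq V] (G : SimpleGraph V) (D D' : V → ℕ) : Prop :=
  ∃ u v, G.Adj u v ∧ 2 ≤ D u ∧
    D' = fun w => if w = u then D u - 2 else if w = v then D v + 1 else D w

/-- `D'` is reachable from `D`: some sequence of pebbling moves starting at `D`
produces a distribution containing `D'`. -/
def Reaches {V : Type*} [DecidableEq V] (G : SimpleGraph V) (D D' : V → ℕ) : Prop :=
  ∃ D'', Relation.ReflTransGen (PebMove G) D D'' ∧ ∀ v, D' v ≤ D'' v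

/-- The pebbling number of a set `S` of target distributions on `G`:
the least `N` (possibly `∞`) such that every member of `S` is reachable from
every distribution with at least `N` pebbles in total. -/
noncomputable def pebSet {V : Type*} [Fintype V] [DecidableEq V] (G : SimpleGraph V)
    (S : Set (V → ℕ)) : ℕ∞ :=
  sInf {N : ℕ∞ | ∀ D₀ : V → ℕ, N ≤ (pebTotal D₀ : ℕ∞) → ∀ D ∈ S, Reaches G D₀ D}

/-- The pebbling number of a single target distribution. -/
noncomputable def peb {V : Type*} [Fintype V] [DecidableEq V] (G : SimpleGraph V)
    (D : V → ℕ) : ℕ∞ :=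
  pebSet G {D}

/-- The target-selectable pebbling number of a set `S` of target distributions:
the least `N` (possibly `∞`) such that from every distribution with at least
`N` pebbles in total, at least one member of `S` is reachable. -/
noncomputable def tsPeb {V : Type*} [Fintype V] [DecidableEq V] (G : SimpleGraph V)
    (S : Set (V → ℕ)) : ℕ∞ :=
  sInf {N : ℕ∞ | ∀ D₀ : V → ℕ, N ≤ (pebTotal D₀ : ℕ∞) → ∃ D ∈ S, Reaches G D₀ D}

namespace TSaux

open SimpleGraph Finset

variable {n : ℕ}

/-- weight toward the left endpoint, scaled by `2^(n-1)`. -/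
def wL (n : ℕ) (D : Fin n → ℕ) : ℕ := ∑ i, D i * 2 ^ (n - 1 - i.val)

/-- weight toward the right endpoint, scaled by `2^(n-1)`. -/
def wR (n : ℕ) (D : Fin n → ℕ) : ℕ := ∑ i, D i * 2 ^ i.val

def mu (n : ℕ) (D : Fin n → ℕ) : ℕ := ∑ i, D i * i.val

lemma move_sum (D : Fin n → ℕ) (X : Fin n → ℕ) (u v : Fin n) (huv : u ≠ v) (h2 : 2 ≤ D u) :
    (∑ i, (if i = u then D u - 2 else if i = v then D v + 1 else D i) * X i) + 2 * X u
      = (∑ i, D i * X i) + X v := by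
  have key : ∀ i, (if i = u then D u - 2 else if i = v then D v + 1 else D i) * X i
      + (if i = u then 2 * X u else 0) = D i * X i + (if i = v then X v else 0) := by
    intro i
    by_cases h : i = u
    · subst h
      rw [if_pos rfl, if_pos rfl, if_neg huv]
      have hD : D i - 2 + 2 = D i := Nat.sub_add_cancel h2
      calc (D i - 2) * X i + 2 * X i = (D i - 2 + 2) * X i := by ring
        _ = D i * X i + 0 := by rw [hD, add_zero]
    · rw [if_neg h, if_neg h]
      by_cases h' : i = v
      · subst h'
        rw [if_pos rfl, if_pos rfl]
        ring
      · rw [if_neg h', if_neg h']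
  calc (∑ i, (if i = u then D u - 2 else if i = v then D v + 1 else D i) * X i) + 2 * X u
      = ∑ i, ((if i = u then D u - 2 else if i = v then D v + 1 else D i) * X i
          + (if i = u then 2 * X u else 0)) := by
        rw [Finset.sum_add_distrib, Finset.sum_ite_eq' Finset.univ u (fun _ => 2 * X u)]
        simp
    _ = ∑ i, (D i * X i + (if i = v then X v else 0)) := by
        exact Finset.sum_congr rfl fun i _ => key i
    _ = (∑ i, D i * X i) + X v := by
        rw [Finset.sum_add_distrib, Finset.sum_ite_eq' Finset.univ v (fun _ => X v)]
        simp

lemma wL_move {D D' : Fin n → ℕ} (h : PebMove (pathGraph n) D D') : wL n D' ≤ wL n D := by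
  obtain ⟨u, v, hadj, h2, rfl⟩ := h
  have huv : u ≠ v := hadj.ne
  have key := move_sum D (fun i => 2 ^ (n - 1 - i.val)) u v huv h2
  have hX : 2 ^ (n - 1 - v.val) ≤ 2 * 2 ^ (n - 1 - u.val) := by
    rcases pathGraph_adj.mp hadj with h1 | h1
    · have : n - 1 - v.val ≤ n - 1 - u.val := by omega
      calc 2 ^ (n - 1 - v.val) ≤ 2 ^ (n - 1 - u.val) := Nat.pow_le_pow_right (by norm_num) this
        _ ≤ 2 * 2 ^ (n - 1 - u.val) := by omega
    · have hv : v.val < n := v.isLt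
      have : n - 1 - v.val = (n - 1 - u.val) + 1 := by omega
      rw [this, pow_succ]
      omega
  have key' : wL n (fun w => if w = u then D u - 2 else if w = v then D v + 1 else D w)
      + 2 * 2 ^ (n - 1 - u.val) = wL n D + 2 ^ (n - 1 - v.val) := key
  omega

lemma mu_move {D : Fin n → ℕ} {u v : Fin n} (huv : u ≠ v) (h2 : 2 ≤ D u) :
    mu n (fun w => if w = u then D u - 2 else if w = v then D v + 1 else D w) + 2 * u.val
      = mu n D + v.val :=
  move_sum D (fun i => i.val) u v huv h2

lemma sum_two (a b : Fin n) (hab : a ≠ b) (A B : ℕ) (g : Fin n → ℕ) :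
    ∑ i, (if i = a then A else if i = b then B else 0) * g i = A * g a + B * g b := by
  have key : ∀ i : Fin n, (if i = a then A else if i = b then B else 0) * g i
      = (if i = a then A * g a else 0) + (if i = b then B * g b else 0) := by
    intro i
    by_cases h : i = a
    · subst h
      rw [if_pos rfl, if_pos rfl, if_neg hab, add_zero]
    · rw [if_neg h, if_neg h, zero_add]
      by_cases h' : i = b
      · subst h'
        rw [if_pos rfl, if_pos rfl]
      · rw [if_neg h', if_neg h', zero_mul]
  rw [Finset.sum_congr rfl fun i _ => key i, Finset.sum_add_distrib,
    Finset.sum_ite_eq' Finset.univ a, Finset.sum_ite_eq' Finset.univ b]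
  simp

lemma geom_two : ∀ m : ℕ, ∑ j ∈ Finset.range m, (2:ℕ) ^ j = 2 ^ m - 1 := by
  intro m
  induction m with
  | zero => simp
  | succ m ih =>
    rw [Finset.sum_range_succ, ih]
    have h1 : (1:ℕ) ≤ 2 ^ m := Nat.one_le_two_pow
    rw [pow_succ]
    omega

lemma sum_pow_lt : ∑ i : Fin n, 2 ^ (n - 1 - i.val) = 2 ^ n - 1 := by
  rw [Fin.sum_univ_eq_sum_range (fun j => 2 ^ (n - 1 - j))]
  have h := Finset.sum_range_reflect (fun j => (2:ℕ) ^ j) n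
  calc ∑ j ∈ Finset.range n, (2:ℕ) ^ (n - 1 - j) = ∑ j ∈ Finset.range n, (2:ℕ) ^ j := h
    _ = 2 ^ n - 1 := geom_two n

lemma wL_reflTrans {D D'' : Fin n → ℕ}
    (h : Relation.ReflTransGen (PebMove (pathGraph n)) D D'') : wL n D'' ≤ wL n D := by
  induction h with
  | refl => exact le_rfl
  | tail _ hbc ih => exact le_trans (wL_move hbc) ih

lemma wL_unit (hn : 0 < n) (t : ℕ) (v : Fin n) : wL n (unitDist t v) = t * 2 ^ (n - 1 - v.val) := by
  unfold wL unitDist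
  rw [Finset.sum_eq_single v (fun b _ hb => by rw [if_neg hb, zero_mul])
    (fun hb => absurd (Finset.mem_univ v) hb), if_pos rfl]

lemma wL_mono {D D' : Fin n → ℕ} (h : ∀ v, D v ≤ D' v) : wL n D ≤ wL n D' :=
  Finset.sum_le_sum fun i _ => Nat.mul_le_mul_right _ (h i)

/-- Necessity: reaching `t` pebbles on the left endpoint needs weight `≥ t·2^(n-1)`. -/
lemma wL_of_reaches (hn : 0 < n) {D : Fin n → ℕ} {t : ℕ}
    (h : Reaches (pathGraph n) D (unitDist t ⟨0, hn⟩)) : t * 2 ^ (n - 1) ≤ wL n D := by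
  obtain ⟨D'', hsteps, hle⟩ := h
  have h1 : wL n D'' ≤ wL n D := wL_reflTrans hsteps
  have h2 : wL n (unitDist t (⟨0, hn⟩ : Fin n)) ≤ wL n D'' := wL_mono hle
  rw [wL_unit hn] at h2
  simpa using le_trans h2 h1

/-- Easy case: if all vertices other than the left endpoint carry at most one pebble. -/
lemma reaches_easy (hn : 0 < n) {D : Fin n → ℕ} {t : ℕ}
    (hsmall : ∀ u : Fin n, 1 ≤ u.val → D u ≤ 1)
    (h : t * 2 ^ (n - 1) ≤ wL n D) : Reaches (pathGraph n) D (unitDist t ⟨0, hn⟩) := by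
  set e0 : Fin n := ⟨0, hn⟩ with he0
  have hwLdef : wL n D = ∑ i, D i * 2 ^ (n - 1 - i.val) := rfl
  have hsplit : D e0 * 2 ^ (n - 1 - e0.val) + ∑ i ∈ Finset.univ.erase e0, D i * 2 ^ (n - 1 - i.val)
      = wL n D := by
    rw [hwLdef]
    exact Finset.add_sum_erase _ (fun i : Fin n => D i * 2 ^ (n - 1 - i.val)) (Finset.mem_univ e0)
  have hbound : ∑ i ∈ Finset.univ.erase e0, D i * 2 ^ (n - 1 - i.val)
      ≤ ∑ i ∈ Finset.univ.erase e0, 2 ^ (n - 1 - i.val) := by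
    refine Finset.sum_le_sum fun i hi => ?_
    have hi' : i ≠ e0 := Finset.ne_of_mem_erase hi
    have : 1 ≤ i.val := by
      rcases Nat.eq_zero_or_pos i.val with h0 | h0
      · exact absurd (Fin.ext h0) hi'
      · exact h0
    calc D i * 2 ^ (n - 1 - i.val) ≤ 1 * 2 ^ (n - 1 - i.val) :=
          Nat.mul_le_mul_right _ (hsmall i this)
      _ = 2 ^ (n - 1 - i.val) := one_mul _
  have hsum2 : 2 ^ (n - 1 - e0.val) + ∑ i ∈ Finset.univ.erase e0, 2 ^ (n - 1 - i.val)
      = 2 ^ n - 1 := by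
    rw [Finset.add_sum_erase _ (fun i : Fin n => 2 ^ (n - 1 - i.val)) (Finset.mem_univ e0)]
    exact sum_pow_lt
  have he0v : e0.val = 0 := rfl
  have hpow : 2 ^ n = 2 * 2 ^ (n - 1) := by
    conv_lhs => rw [show n = (n - 1) + 1 by omega]
    rw [pow_succ]; ring
  have hDe0 : t ≤ D e0 := by
    by_contra hlt
    push_neg at hlt
    have h1 : wL n D ≤ D e0 * 2 ^ (n - 1) + (2 ^ (n - 1) - 1) := by
      rw [← hsplit]
      have : ∑ i ∈ Finset.univ.erase e0, 2 ^ (n - 1 - i.val) = 2 ^ (n - 1) - 1 := by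
        rw [he0v] at hsum2
        simp only [Nat.sub_zero] at hsum2
        omega
      rw [he0v]
      simp only [Nat.sub_zero]
      omega
    have h2 : (D e0 + 1) * 2 ^ (n - 1) ≤ t * 2 ^ (n - 1) :=
      Nat.mul_le_mul_right _ hlt
    have h3 : (0:ℕ) < 2 ^ (n - 1) := Nat.pow_pos (by norm_num)
    have hfinal : t * 2 ^ (n - 1) < t * 2 ^ (n - 1) := by
      calc t * 2 ^ (n - 1) ≤ wL n D := h
        _ ≤ D e0 * 2 ^ (n - 1) + (2 ^ (n - 1) - 1) := h1
        _ < D e0 * 2 ^ (n - 1) + 2 ^ (n - 1) := by omega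
        _ = (D e0 + 1) * 2 ^ (n - 1) := by ring
        _ ≤ t * 2 ^ (n - 1) := h2
    exact absurd hfinal (lt_irrefl _)
  refine ⟨D, Relation.ReflTransGen.refl, fun v => ?_⟩
  unfold unitDist
  by_cases hv : v = e0
  · subst hv; rw [if_pos rfl]; exact hDe0
  · rw [if_neg hv]; exact Nat.zero_le _

/-- Sufficiency. -/
lemma reaches_of_wL (hn : 0 < n) {t : ℕ} :
    ∀ (m : ℕ) (D : Fin n → ℕ), mu n D ≤ m → t * 2 ^ (n - 1) ≤ wL n D →
      Reaches (pathGraph n) D (unitDist t ⟨0, hn⟩) := by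
  intro m
  induction m with
  | zero =>
    intro D hmu h
    refine reaches_easy hn (fun u hu => ?_) h
    by_contra hDu
    push_neg at hDu
    have : D u * u.val ≤ mu n D := by
      unfold mu
      exact Finset.single_le_sum (f := fun i : Fin n => D i * i.val)
        (fun i _ => Nat.zero_le _) (Finset.mem_univ u)
    nlinarith
  | succ m ih =>
    intro D hmu h
    by_cases hex : ∃ u : Fin n, 1 ≤ u.val ∧ 2 ≤ D u
    · obtain ⟨u, hu1, hu2⟩ := hex
      have hun : u.val < n := u.isLt
      set v : Fin n := ⟨u.val - 1, by omega⟩ with hv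
      have hvval : v.val = u.val - 1 := rfl
      have huv : u ≠ v := by
        intro hEq
        have := congrArg Fin.val hEq
        rw [hvval] at this
        omega
      have hadj : (pathGraph n).Adj u v := pathGraph_adj.mpr (Or.inr (by rw [hvval]; omega))
      set D' : Fin n → ℕ := fun w => if w = u then D u - 2 else if w = v then D v + 1 else D w with hD'
      have hmove : PebMove (pathGraph n) D D' := ⟨u, v, hadj, hu2, rfl⟩
      have hmukey : mu n D' + 2 * u.val = mu n D + v.val := mu_move huv hu2
      have hwLkey : wL n D' + 2 * 2 ^ (n - 1 - u.val) = wL n D + 2 ^ (n - 1 - v.val) :=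
        move_sum D (fun i => 2 ^ (n - 1 - i.val)) u v huv hu2
      have hvpow : 2 ^ (n - 1 - v.val) = 2 * 2 ^ (n - 1 - u.val) := by
        rw [show n - 1 - v.val = (n - 1 - u.val) + 1 by rw [hvval]; omega, pow_succ]
        ring
      have hwL : wL n D' = wL n D := by omega
      have hmu' : mu n D' ≤ m := by
        rw [hvval] at hmukey
        omega
      obtain ⟨D'', hsteps, hcont⟩ := ih D' hmu' (hwL ▸ h)
      exact ⟨D'', Relation.ReflTransGen.head hmove hsteps, hcont⟩
    · push_neg at hex
      exact reaches_easy hn (fun u hu => by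
        rcases Nat.lt_or_ge (D u) 2 with h2 | h2
        · omega
        · exact absurd h2 (Nat.not_le.mpr (hex u hu))) h

/-- Characterization for the left endpoint. -/
lemma reaches_left_iff (hn : 0 < n) {D : Fin n → ℕ} {t : ℕ} :
    Reaches (pathGraph n) D (unitDist t ⟨0, hn⟩) ↔ t * 2 ^ (n - 1) ≤ wL n D :=
  ⟨wL_of_reaches hn, fun h => reaches_of_wL hn (mu n D) D le_rfl h⟩

/-- The reflection of the path. -/
def sig (n : ℕ) : Fin n → Fin n := fun i => ⟨n - 1 - i.val, by omega⟩

lemma sig_sig (i : Fin n) : sig n (sig n i) = i := by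
  have := i.isLt
  apply Fin.ext
  show n - 1 - (n - 1 - i.val) = i.val
  omega

lemma sig_eq_iff {w u : Fin n} : sig n w = u ↔ w = sig n u := by
  constructor
  · intro h; rw [← h, sig_sig]
  · intro h; rw [h, sig_sig]

lemma sig_adj {u v : Fin n} (h : (pathGraph n).Adj u v) :
    (pathGraph n).Adj (sig n u) (sig n v) := by
  have hu := u.isLt
  have hv := v.isLt
  rw [pathGraph_adj] at h ⊢
  show (n - 1 - u.val) + 1 = n - 1 - v.val ∨ (n - 1 - v.val) + 1 = n - 1 - u.val
  omega

lemma pebmove_sig {D D' : Fin n → ℕ} (h : PebMove (pathGraph n) D D') :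
    PebMove (pathGraph n) (D ∘ sig n) (D' ∘ sig n) := by
  obtain ⟨u, v, hadj, h2, rfl⟩ := h
  refine ⟨sig n u, sig n v, sig_adj hadj, ?_, ?_⟩
  · show 2 ≤ D (sig n (sig n u))
    rw [sig_sig]; exact h2
  · funext w
    show (if sig n w = u then D u - 2 else if sig n w = v then D v + 1 else D (sig n w)) = _
    by_cases h1 : w = sig n u
    · rw [if_pos (sig_eq_iff.mpr h1), if_pos h1]
      show D u - 2 = D (sig n (sig n u)) - 2
      rw [sig_sig]
    · rw [if_neg (fun hh => h1 (sig_eq_iff.mp hh)), if_neg h1]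
      by_cases h2' : w = sig n v
      · rw [if_pos (sig_eq_iff.mpr h2'), if_pos h2']
        show D v + 1 = D (sig n (sig n v)) + 1
        rw [sig_sig]
      · rw [if_neg (fun hh => h2' (sig_eq_iff.mp hh)), if_neg h2']
        rfl

lemma reaches_sig {D T : Fin n → ℕ} (h : Reaches (pathGraph n) D T) :
    Reaches (pathGraph n) (D ∘ sig n) (T ∘ sig n) := by
  obtain ⟨D'', hsteps, hle⟩ := h
  refine ⟨D'' ∘ sig n, ?_, fun v => hle (sig n v)⟩
  exact Relation.ReflTransGen.lift (fun f => f ∘ sig n) (fun a b hab => pebmove_sig hab) _ _ hsteps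

lemma unit_sig (t : ℕ) (e : Fin n) : (unitDist t e) ∘ sig n = unitDist t (sig n e) := by
  funext w
  show (if sig n w = e then t else 0) = (if w = sig n e then t else 0)
  by_cases h : w = sig n e
  · rw [if_pos (sig_eq_iff.mpr h), if_pos h]
  · rw [if_neg (fun hh => h (sig_eq_iff.mp hh)), if_neg h]

lemma wL_sig (D : Fin n → ℕ) : wL n (D ∘ sig n) = wR n D := by
  unfold wL wR
  refine Fintype.sum_equiv (Function.Involutive.toPerm (sig n) sig_sig) _ _ fun i => ?_
  show D (sig n i) * 2 ^ (n - 1 - i.val) = D (sig n i) * 2 ^ (sig n i).val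
  rfl

lemma comp_sig_sig (D : Fin n → ℕ) : (D ∘ sig n) ∘ sig n = D := by
  funext w
  show D (sig n (sig n w)) = D w
  rw [sig_sig]

lemma sig_zero (hn : 0 < n) : sig n (⟨0, hn⟩ : Fin n) = ⟨n - 1, by omega⟩ := by
  apply Fin.ext
  show n - 1 - 0 = n - 1
  omega

lemma sig_last (hn : 0 < n) : sig n (⟨n - 1, by omega⟩ : Fin n) = ⟨0, hn⟩ := by
  apply Fin.ext
  show n - 1 - (n - 1) = 0
  omega

/-- Characterization for the right endpoint. -/
lemma reaches_right_iff (hn : 0 < n) {D : Fin n → ℕ} {t : ℕ} :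
    Reaches (pathGraph n) D (unitDist t ⟨n - 1, by omega⟩) ↔ t * 2 ^ (n - 1) ≤ wR n D := by
  constructor
  · intro h
    have h' := reaches_sig h
    rw [unit_sig, sig_last hn] at h'
    have := wL_of_reaches hn h'
    rwa [wL_sig] at this
  · intro h
    rw [← wL_sig] at h
    have h' := reaches_sig ((reaches_left_iff hn).mpr h)
    rw [comp_sig_sig, unit_sig, sig_zero hn] at h'
    exact h'

/-- Generic evaluation of `tsPeb`. -/
lemma tsPeb_eq {V : Type*} [Fintype V] [DecidableEq V] (G : SimpleGraph V)
    (S : Set (V → ℕ)) (N : ℕ)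
    (hmem : ∀ D₀ : V → ℕ, (N : ℕ∞) ≤ (pebTotal D₀ : ℕ∞) → ∃ D ∈ S, Reaches G D₀ D)
    (W : V → ℕ) (hWtot : pebTotal W + 1 = N)
    (hbad : ¬ ∃ D ∈ S, Reaches G W D) : tsPeb G S = N := by
  apply le_antisymm
  · exact sInf_le hmem
  · refine le_sInf fun M hM => ?_
    by_contra hlt
    push_neg at hlt
    have hM' : M ≤ (pebTotal W : ℕ∞) := by
      induction M using ENat.recTopCoe with
      | top => exact absurd hlt (not_top_lt)
      | coe m =>
        rw [Nat.cast_le]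
        rw [Nat.cast_lt] at hlt
        omega
    exact hbad (hM W hM')

lemma pow_two_pos (m : ℕ) : (1:ℕ) ≤ 2 ^ m := Nat.one_le_two_pow

lemma per_pebble (k j : ℕ) (hj : j ≤ 4 * k + 1) :
    3 * 2 ^ (2 * k) ≤ 2 ^ (4 * k + 1 - j) + 2 ^ j := by
  rcases le_or_gt j (2 * k) with h | h
  · rcases eq_or_lt_of_le h with h' | h'
    · rw [h', show 4 * k + 1 - (2 * k) = 2 * k + 1 by omega, pow_succ]
      omega
    · have h1 : (2:ℕ) ^ (2 * k + 2) ≤ 2 ^ (4 * k + 1 - j) :=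
        Nat.pow_le_pow_right (by norm_num) (by omega)
      have h2 : (2:ℕ) ^ (2 * k + 2) = 4 * 2 ^ (2 * k) := by rw [pow_add]; ring
      have h3 := pow_two_pos j
      omega
  · rcases eq_or_lt_of_le (show 2 * k + 1 ≤ j by omega) with h' | h'
    · rw [← h']
      have e1 : (2:ℕ) ^ (2 * k + 1) = 2 * 2 ^ (2 * k) := by rw [pow_succ]; ring
      have e2 : 4 * k + 1 - (2 * k + 1) = 2 * k := by omega
      rw [e2, e1]
      omega
    · have h1 : (2:ℕ) ^ (2 * k + 2) ≤ 2 ^ j :=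
        Nat.pow_le_pow_right (by norm_num) (by omega)
      have h2 : (2:ℕ) ^ (2 * k + 2) = 4 * 2 ^ (2 * k) := by rw [pow_add]; ring
      have h3 := pow_two_pos (4 * k + 1 - j)
      omega

lemma per_pebble_far (k j : ℕ) (hk : 1 ≤ k) (hj : j ≤ 4 * k + 1)
    (h1 : j ≠ 2 * k) (h2 : j ≠ 2 * k + 1) :
    9 * 2 ^ (2 * k) ≤ 2 * (2 ^ (4 * k + 1 - j) + 2 ^ j) := by
  have hPQ : (2:ℕ) ^ (2 * k) = 2 * 2 ^ (2 * k - 1) := by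
    conv_lhs => rw [show 2 * k = (2 * k - 1) + 1 by omega]
    rw [pow_succ]; ring
  have hcase : j ≤ 2 * k - 1 ∨ 2 * k + 2 ≤ j := by omega
  rcases hcase with h | h
  · rcases eq_or_lt_of_le h with h' | h'
    · subst h'
      have e1 : 4 * k + 1 - (2 * k - 1) = 2 * k + 2 := by omega
      have e2 : (2:ℕ) ^ (2 * k + 2) = 4 * 2 ^ (2 * k) := by rw [pow_add]; ring
      rw [e1, e2]
      omega
    · have e1 : (2:ℕ) ^ (2 * k + 3) ≤ 2 ^ (4 * k + 1 - j) :=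
        Nat.pow_le_pow_right (by norm_num) (by omega)
      have e2 : (2:ℕ) ^ (2 * k + 3) = 8 * 2 ^ (2 * k) := by rw [pow_add]; ring
      have e3 := pow_two_pos j
      omega
  · rcases eq_or_lt_of_le h with h' | h'
    · rw [← h']
      have e1 : 4 * k + 1 - (2 * k + 2) = 2 * k - 1 := by omega
      have e2 : (2:ℕ) ^ (2 * k + 2) = 4 * 2 ^ (2 * k) := by rw [pow_add]; ring
      rw [e1, e2]
      omega
    · have e1 : (2:ℕ) ^ (2 * k + 3) ≤ 2 ^ j :=
        Nat.pow_le_pow_right (by norm_num) (by omega)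
      have e2 : (2:ℕ) ^ (2 * k + 3) = 8 * 2 ^ (2 * k) := by rw [pow_add]; ring
      have e3 := pow_two_pos (4 * k + 1 - j)
      omega

lemma sum_two' (a b : Fin n) (hab : a ≠ b) (A B : ℕ) :
    ∑ i, (if i = a then A else if i = b then B else 0) = A + B := by
  have h := sum_two a b hab A B (fun _ => 1)
  simpa using h

lemma weights_eq (k : ℕ) (D : Fin (4 * k + 2) → ℕ) :
    wL (4 * k + 2) D + wR (4 * k + 2) D
      = ∑ i, D i * (2 ^ (4 * k + 1 - i.val) + 2 ^ (i.val)) := by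
  unfold wL wR
  rw [← Finset.sum_add_distrib]
  refine Finset.sum_congr rfl fun i _ => ?_
  have hexp : 4 * k + 2 - 1 - i.val = 4 * k + 1 - i.val := by omega
  rw [hexp, Nat.mul_add]

lemma count2 (k c : ℕ) (hc : 3 * c + 1 = 2 ^ (2 * k + 2)) (D : Fin (4 * k + 2) → ℕ)
    (hL : wL (4 * k + 2) D ≤ 2 * 2 ^ (4 * k + 1) - 1)
    (hR : wR (4 * k + 2) D ≤ 2 * 2 ^ (4 * k + 1) - 1) : pebTotal D ≤ 2 * c := by
  have hsum : 3 * 2 ^ (2 * k) * pebTotal D ≤ wL (4 * k + 2) D + wR (4 * k + 2) D := by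
    rw [weights_eq]
    unfold pebTotal
    rw [Finset.mul_sum]
    refine Finset.sum_le_sum fun i _ => ?_
    have hi : i.val ≤ 4 * k + 1 := by have := i.isLt; omega
    calc 3 * 2 ^ (2 * k) * D i = D i * (3 * 2 ^ (2 * k)) := by ring
      _ ≤ D i * (2 ^ (4 * k + 1 - i.val) + 2 ^ (i.val)) :=
          Nat.mul_le_mul_left _ (per_pebble k i.val hi)
  have e1 : 2 * (2:ℕ) ^ (4 * k + 1) = 2 ^ (2 * k) * (3 * c + 1) := by
    rw [hc, ← pow_add, show 2 * k + (2 * k + 2) = (4 * k + 1) + 1 by ring, pow_succ]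
    ring
  by_contra hT
  push_neg at hT
  have h2 : 3 * 2 ^ (2 * k) * (2 * c + 1) ≤ 3 * 2 ^ (2 * k) * pebTotal D :=
    Nat.mul_le_mul_left _ (by omega)
  have h3 : 3 * 2 ^ (2 * k) * (2 * c + 1)
      = 2 ^ (2 * k) * (3 * c + 1) + 2 ^ (2 * k) * (3 * c + 1) + 2 ^ (2 * k) := by ring
  have hP := pow_two_pos (2 * k)
  have hY := pow_two_pos (4 * k + 1)
  omega

lemma count1 (k c : ℕ) (hk : 1 ≤ k) (hc : 3 * c + 1 = 2 ^ (2 * k + 2))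
    (D : Fin (4 * k + 2) → ℕ)
    (hL : wL (4 * k + 2) D ≤ 2 ^ (4 * k + 1) - 1)
    (hR : wR (4 * k + 2) D ≤ 2 ^ (4 * k + 1) - 1) : pebTotal D + 1 ≤ c := by
  have e1 : 2 * (2:ℕ) ^ (4 * k + 1) = 2 ^ (2 * k) * (3 * c + 1) := by
    rw [hc, ← pow_add, show 2 * k + (2 * k + 2) = (4 * k + 1) + 1 by ring, pow_succ]
    ring
  have hP := pow_two_pos (2 * k)
  have hY := pow_two_pos (4 * k + 1)
  by_cases hcase : ∃ i : Fin (4 * k + 2), (i.val ≠ 2 * k ∧ i.val ≠ 2 * k + 1) ∧ 1 ≤ D i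
  · obtain ⟨i0, ⟨hi1, hi2⟩, hDi⟩ := hcase
    set F : Fin (4 * k + 2) → ℕ := fun i => D i * (2 ^ (4 * k + 1 - i.val) + 2 ^ (i.val)) with hF
    have hsplitS : F i0 + ∑ i ∈ Finset.univ.erase i0, F i = ∑ i, F i :=
      Finset.add_sum_erase _ F (Finset.mem_univ i0)
    have hsplitT : D i0 + ∑ i ∈ Finset.univ.erase i0, D i = pebTotal D :=
      Finset.add_sum_erase _ D (Finset.mem_univ i0)
    have hA : 3 * 2 ^ (2 * k) * (∑ i ∈ Finset.univ.erase i0, D i)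
        ≤ ∑ i ∈ Finset.univ.erase i0, F i := by
      rw [Finset.mul_sum]
      refine Finset.sum_le_sum fun i _ => ?_
      have hi : i.val ≤ 4 * k + 1 := by have := i.isLt; omega
      calc 3 * 2 ^ (2 * k) * D i = D i * (3 * 2 ^ (2 * k)) := by ring
        _ ≤ F i := Nat.mul_le_mul_left _ (per_pebble k i.val hi)
    have hB : 6 * 2 ^ (2 * k) * D i0 + 3 * 2 ^ (2 * k) ≤ 2 * F i0 := by
      have hi : i0.val ≤ 4 * k + 1 := by have := i0.isLt; omega
      have h9 := per_pebble_far k i0.val hk hi hi1 hi2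
      have hmul : D i0 * (9 * 2 ^ (2 * k))
          ≤ D i0 * (2 * (2 ^ (4 * k + 1 - i0.val) + 2 ^ (i0.val))) :=
        Nat.mul_le_mul_left _ h9
      have hD1 : 3 * 2 ^ (2 * k) * 1 ≤ 3 * 2 ^ (2 * k) * D i0 :=
        Nat.mul_le_mul_left _ hDi
      have hrw1 : D i0 * (2 * (2 ^ (4 * k + 1 - i0.val) + 2 ^ (i0.val))) = 2 * F i0 := by
        rw [hF]; ring
      have hrw2 : D i0 * (9 * 2 ^ (2 * k))
          = 6 * 2 ^ (2 * k) * D i0 + 3 * 2 ^ (2 * k) * D i0 := by ring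
      omega
    have key : 6 * 2 ^ (2 * k) * pebTotal D + 3 * 2 ^ (2 * k)
        ≤ 2 * (wL (4 * k + 2) D + wR (4 * k + 2) D) := by
      rw [weights_eq]
      show 6 * 2 ^ (2 * k) * pebTotal D + 3 * 2 ^ (2 * k) ≤ 2 * ∑ i, F i
      have hdist : 6 * 2 ^ (2 * k) * pebTotal D
          = 6 * 2 ^ (2 * k) * D i0
            + 2 * (3 * 2 ^ (2 * k) * (∑ i ∈ Finset.univ.erase i0, D i)) := by
        rw [← hsplitT]; ring
      have hS2 : 2 * (∑ i, F i)
          = 2 * F i0 + 2 * (∑ i ∈ Finset.univ.erase i0, F i) := by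
        rw [← hsplitS]; ring
      omega
    by_contra hT
    push_neg at hT
    have h2 : 6 * 2 ^ (2 * k) * c ≤ 6 * 2 ^ (2 * k) * pebTotal D :=
      Nat.mul_le_mul_left _ (by omega)
    have h3 : 6 * 2 ^ (2 * k) * c + 2 * (2 ^ (2 * k) * (3 * c + 1))
        = 2 * (2 ^ (2 * k) * (3 * c + 1)) + 6 * 2 ^ (2 * k) * c := by ring
    have h4 : 2 * (2 ^ (2 * k) * (3 * c + 1)) = 6 * 2 ^ (2 * k) * c + 2 * 2 ^ (2 * k) := by ring
    omega
  · push_neg at hcase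
    set a0 : Fin (4 * k + 2) := ⟨2 * k, by omega⟩ with ha0
    set b0 : Fin (4 * k + 2) := ⟨2 * k + 1, by omega⟩ with hb0
    have hva : a0.val = 2 * k := rfl
    have hvb : b0.val = 2 * k + 1 := rfl
    have hab : a0 ≠ b0 := by
      intro h
      have h' := congrArg Fin.val h
      rw [hva, hvb] at h'
      omega
    have hDeq : D = fun i => if i = a0 then D a0 else if i = b0 then D b0 else 0 := by
      funext i
      by_cases h1 : i = a0
      · rw [if_pos h1, h1]
      · rw [if_neg h1]
        by_cases h2 : i = b0
        · rw [if_pos h2, h2]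
        · rw [if_neg h2]
          have hi1 : i.val ≠ 2 * k := fun h => h1 (Fin.ext h)
          have hi2 : i.val ≠ 2 * k + 1 := fun h => h2 (Fin.ext h)
          have := hcase i ⟨hi1, hi2⟩
          omega
    have hwL : wL (4 * k + 2) D = D a0 * 2 ^ (2 * k + 1) + D b0 * 2 ^ (2 * k) := by
      conv_lhs => rw [hDeq]
      unfold wL
      rw [sum_two a0 b0 hab (D a0) (D b0) (fun i => 2 ^ (4 * k + 2 - 1 - i.val))]
      rw [hva, hvb, show 4 * k + 2 - 1 - (2 * k) = 2 * k + 1 by omega,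
        show 4 * k + 2 - 1 - (2 * k + 1) = 2 * k by omega]
    have hwR : wR (4 * k + 2) D = D a0 * 2 ^ (2 * k) + D b0 * 2 ^ (2 * k + 1) := by
      conv_lhs => rw [hDeq]
      unfold wR
      rw [sum_two a0 b0 hab (D a0) (D b0) (fun i => 2 ^ i.val)]
    have htot : pebTotal D = D a0 + D b0 := by
      conv_lhs => rw [hDeq]
      unfold pebTotal
      exact sum_two' a0 b0 hab (D a0) (D b0)
    have e2 : (2:ℕ) ^ (2 * k + 1) = 2 * 2 ^ (2 * k) := by rw [pow_succ]; ring
    have e4 : (2:ℕ) ^ (4 * k + 1) = 2 ^ (2 * k + 1) * 2 ^ (2 * k) := by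
      rw [← pow_add]
      congr 1
      omega
    have hLa : 2 * D a0 + D b0 < 2 ^ (2 * k + 1) := by
      have h1 : (2 * D a0 + D b0) * 2 ^ (2 * k) < 2 ^ (2 * k + 1) * 2 ^ (2 * k) := by
        have hexp : (2 * D a0 + D b0) * 2 ^ (2 * k)
            = D a0 * 2 ^ (2 * k + 1) + D b0 * 2 ^ (2 * k) := by rw [e2]; ring
        omega
      exact Nat.lt_of_mul_lt_mul_right h1
    have hRa : D a0 + 2 * D b0 < 2 ^ (2 * k + 1) := by
      have h1 : (D a0 + 2 * D b0) * 2 ^ (2 * k) < 2 ^ (2 * k + 1) * 2 ^ (2 * k) := by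
        have hexp : (D a0 + 2 * D b0) * 2 ^ (2 * k)
            = D a0 * 2 ^ (2 * k) + D b0 * 2 ^ (2 * k + 1) := by rw [e2]; ring
        omega
      exact Nat.lt_of_mul_lt_mul_right h1
    have e5 : (2:ℕ) ^ (2 * k + 2) = 2 * 2 ^ (2 * k + 1) := by rw [pow_succ]; ring
    omega

lemma exists_c : ∀ m : ℕ, ∃ c : ℕ, 3 * c + 1 = 2 ^ (2 * m + 2) := by
  intro m
  induction m with
  | zero => exact ⟨1, rfl⟩
  | succ m ih =>
    obtain ⟨c, hc⟩ := ih
    refine ⟨4 * c + 1, ?_⟩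
    have e : (2:ℕ) ^ (2 * (m + 1) + 2) = 4 * 2 ^ (2 * m + 2) := by
      rw [show 2 * (m + 1) + 2 = (2 * m + 2) + 2 by ring, pow_add]
      ring
    omega

lemma exists_d : ∀ m : ℕ, ∃ d : ℕ, 3 * d = 2 ^ (2 * m + 1) + 1 := by
  intro m
  induction m with
  | zero => exact ⟨1, rfl⟩
  | succ m ih =>
    obtain ⟨d, hd⟩ := ih
    refine ⟨4 * d - 1, ?_⟩
    have e : (2:ℕ) ^ (2 * (m + 1) + 1) = 4 * 2 ^ (2 * m + 1) := by
      rw [show 2 * (m + 1) + 1 = (2 * m + 1) + 2 by ring, pow_add]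
      ring
    omega

lemma exists_b : ∀ m : ℕ, 1 ≤ m → ∃ b : ℕ, 3 * b + 5 = 2 ^ (2 * m + 1) := by
  intro m
  induction m with
  | zero => omega
  | succ m ih =>
    intro _
    rcases Nat.eq_zero_or_pos m with rfl | hm
    · exact ⟨1, rfl⟩
    · obtain ⟨b, hb⟩ := ih hm
      refine ⟨4 * b + 5, ?_⟩
      have e : (2:ℕ) ^ (2 * (m + 1) + 1) = 4 * 2 ^ (2 * m + 1) := by
        rw [show 2 * (m + 1) + 1 = (2 * m + 1) + 2 by ring, pow_add]
        ring
      omega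

/-- The two-spike distribution at the middle of `P_{4k+2}`. -/
def pairDist (k A B : ℕ) : Fin (4 * k + 2) → ℕ :=
  fun i => if i = (⟨2 * k, by omega⟩ : Fin (4 * k + 2)) then A
    else if i = (⟨2 * k + 1, by omega⟩ : Fin (4 * k + 2)) then B else 0

lemma pair_ne (k : ℕ) : (⟨2 * k, by omega⟩ : Fin (4 * k + 2)) ≠ ⟨2 * k + 1, by omega⟩ := by
  intro h
  have h' := congrArg Fin.val h
  have h1 : ((⟨2 * k, by omega⟩ : Fin (4 * k + 2))).val = 2 * k := rfl
  have h2 : ((⟨2 * k + 1, by omega⟩ : Fin (4 * k + 2))).val = 2 * k + 1 := rfl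
  rw [h1, h2] at h'
  omega

lemma wL_pair (k A B : ℕ) :
    wL (4 * k + 2) (pairDist k A B) = A * 2 ^ (2 * k + 1) + B * 2 ^ (2 * k) := by
  unfold wL pairDist
  rw [sum_two _ _ (pair_ne k) A B (fun i => 2 ^ (4 * k + 2 - 1 - i.val))]
  rw [show ((⟨2 * k, by omega⟩ : Fin (4 * k + 2))).val = 2 * k from rfl,
    show ((⟨2 * k + 1, by omega⟩ : Fin (4 * k + 2))).val = 2 * k + 1 from rfl,
    show 4 * k + 2 - 1 - (2 * k) = 2 * k + 1 by omega,
    show 4 * k + 2 - 1 - (2 * k + 1) = 2 * k by omega]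

lemma wR_pair (k A B : ℕ) :
    wR (4 * k + 2) (pairDist k A B) = A * 2 ^ (2 * k) + B * 2 ^ (2 * k + 1) := by
  unfold wR pairDist
  rw [sum_two _ _ (pair_ne k) A B (fun i => 2 ^ i.val)]

lemma tot_pair (k A B : ℕ) : pebTotal (pairDist k A B) = A + B := by
  unfold pebTotal pairDist
  exact sum_two' _ _ (pair_ne k) A B

lemma reaches_left_iff' (k t : ℕ) (D : Fin (4 * k + 2) → ℕ) :
    Reaches (pathGraph (4 * k + 2)) D (unitDist t ⟨0, by omega⟩)
      ↔ t * 2 ^ (4 * k + 1) ≤ wL (4 * k + 2) D :=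
  reaches_left_iff (n := 4 * k + 2) (by omega)

lemma reaches_right_iff' (k t : ℕ) (D : Fin (4 * k + 2) → ℕ) :
    Reaches (pathGraph (4 * k + 2)) D (unitDist t ⟨4 * k + 1, Nat.lt_add_one _⟩)
      ↔ t * 2 ^ (4 * k + 1) ≤ wR (4 * k + 2) D :=
  reaches_right_iff (n := 4 * k + 2) (by omega)

lemma tsPeb2 (k c : ℕ) (hk : 1 ≤ k) (hc : 3 * c + 1 = 2 ^ (2 * k + 2)) :
    tsPeb (pathGraph (4 * k + 2))
        {unitDist 2 (⟨0, by omega⟩ : Fin (4 * k + 2)),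
         unitDist 2 (⟨4 * k + 1, Nat.lt_add_one _⟩ : Fin (4 * k + 2))}
      = ((2 * c + 1 : ℕ) : ℕ∞) := by
  have hP := pow_two_pos (2 * k)
  have e1 : 2 * (2:ℕ) ^ (4 * k + 1) = 2 ^ (2 * k) * (3 * c + 1) := by
    rw [hc, ← pow_add, show 2 * k + (2 * k + 2) = (4 * k + 1) + 1 by ring, pow_succ]
    ring
  have e2 : (2:ℕ) ^ (2 * k + 1) = 2 * 2 ^ (2 * k) := by rw [pow_succ]; ring
  refine tsPeb_eq _ _ (2 * c + 1) ?_ (pairDist k c c) ?_ ?_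
  · intro D₀ hTot
    by_contra hno
    push_neg at hno
    have hA := hno _ (Set.mem_insert _ _)
    have hB := hno _ (Set.mem_insert_of_mem _ rfl)
    rw [reaches_left_iff'] at hA
    rw [reaches_right_iff'] at hB
    have hY := pow_two_pos (4 * k + 1)
    have hT := count2 k c hc D₀ (by omega) (by omega)
    have hT' : 2 * c + 1 ≤ pebTotal D₀ := Nat.cast_le.mp hTot
    omega
  · rw [tot_pair]
    omega
  · rintro ⟨D, hD, hre⟩
    simp only [Set.mem_insert_iff, Set.mem_singleton_iff] at hD
    have hx : c * 2 ^ (2 * k + 1) + c * 2 ^ (2 * k) + 2 ^ (2 * k)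
        = 2 ^ (2 * k) * (3 * c + 1) := by rw [e2]; ring
    rcases hD with rfl | rfl
    · rw [reaches_left_iff', wL_pair] at hre
      omega
    · rw [reaches_right_iff', wR_pair] at hre
      omega

lemma tsPeb1 (k c d b : ℕ) (hk : 1 ≤ k) (hc : 3 * c + 1 = 2 ^ (2 * k + 2))
    (hd : 3 * d = 2 ^ (2 * k + 1) + 1) (hb : 3 * b + 5 = 2 ^ (2 * k + 1)) :
    tsPeb (pathGraph (4 * k + 2))
        {unitDist 1 (⟨0, by omega⟩ : Fin (4 * k + 2)),
         unitDist 1 (⟨4 * k + 1, Nat.lt_add_one _⟩ : Fin (4 * k + 2))}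
      = ((c : ℕ) : ℕ∞) := by
  have hP := pow_two_pos (2 * k)
  have e2 : (2:ℕ) ^ (2 * k + 1) = 2 * 2 ^ (2 * k) := by rw [pow_succ]; ring
  have e4 : (2:ℕ) ^ (4 * k + 1) = 2 * (2 ^ (2 * k) * 2 ^ (2 * k)) := by
    rw [← pow_add, ← pow_succ']
    congr 1
    ring
  have e5 : (2:ℕ) ^ (2 * k + 2) = 2 * 2 ^ (2 * k + 1) := by rw [pow_succ]; ring
  refine tsPeb_eq _ _ c ?_ (pairDist k d b) ?_ ?_
  · intro D₀ hTot
    by_contra hno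
    push_neg at hno
    have hA := hno _ (Set.mem_insert _ _)
    have hB := hno _ (Set.mem_insert_of_mem _ rfl)
    rw [reaches_left_iff'] at hA
    rw [reaches_right_iff'] at hB
    have hY := pow_two_pos (4 * k + 1)
    have hT := count1 k c hk hc D₀ (by omega) (by omega)
    have hT' : c ≤ pebTotal D₀ := Nat.cast_le.mp hTot
    omega
  · rw [tot_pair]
    omega
  · rintro ⟨D, hD, hre⟩
    simp only [Set.mem_insert_iff, Set.mem_singleton_iff] at hD
    rcases hD with rfl | rfl
    · rw [reaches_left_iff', wL_pair] at hre
      have h1 : (3 * b + 5) * 2 ^ (2 * k) = 2 ^ (2 * k + 1) * 2 ^ (2 * k) := by rw [hb]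
      have h1' : (3 * b + 5) * 2 ^ (2 * k) = 3 * (b * 2 ^ (2 * k)) + 5 * 2 ^ (2 * k) := by ring
      have h2 : 3 * (d * 2 ^ (2 * k + 1)) = (3 * d) * 2 ^ (2 * k + 1) := by ring
      rw [hd] at h2
      have h3 : ((2:ℕ) ^ (2 * k + 1) + 1) * 2 ^ (2 * k + 1)
          = 4 * (2 ^ (2 * k) * 2 ^ (2 * k)) + 2 ^ (2 * k + 1) := by rw [e2]; ring
      have h4 : (2:ℕ) ^ (2 * k + 1) * 2 ^ (2 * k) = 2 * (2 ^ (2 * k) * 2 ^ (2 * k)) := by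
        rw [e2]; ring
      omega
    · rw [reaches_right_iff', wR_pair] at hre
      have h1 : (3 * b + 5) * 2 ^ (2 * k + 1) = 2 ^ (2 * k + 1) * 2 ^ (2 * k + 1) := by rw [hb]
      have h1' : (3 * b + 5) * 2 ^ (2 * k + 1)
          = 3 * (b * 2 ^ (2 * k + 1)) + 5 * 2 ^ (2 * k + 1) := by ring
      have h2 : 3 * (d * 2 ^ (2 * k)) = (3 * d) * 2 ^ (2 * k) := by ring
      rw [hd] at h2
      have h3 : ((2:ℕ) ^ (2 * k + 1) + 1) * 2 ^ (2 * k)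
          = 2 * (2 ^ (2 * k) * 2 ^ (2 * k)) + 2 ^ (2 * k) := by rw [e2]; ring
      have h4 : (2:ℕ) ^ (2 * k + 1) * 2 ^ (2 * k + 1)
          = 4 * (2 ^ (2 * k) * 2 ^ (2 * k)) := by rw [e2]; ring
      omega

end TSaux

open TSaux in
open SimpleGraph in
/-- On the path `P_{4k+2}`, the target-selectable pebbling number of the two
double-endpoint targets exceeds twice that of the two single-endpoint targets:
`ρ(P_{4k+2}, 𝒟₂) = (2^{2k+3}+1)/3` while `2·ρ(P_{4k+2}, 𝒟₁) = (2^{2k+3}-2)/3`. -/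
theorem ts_path_counterexample (k : ℕ) (hk : 1 ≤ k) :
    tsPeb (pathGraph (4 * k + 2))
        {unitDist 2 (⟨0, by omega⟩ : Fin (4 * k + 2)),
         unitDist 2 (⟨4 * k + 1, by omega⟩ : Fin (4 * k + 2))}
      = (((2 ^ (2 * k + 3) + 1) / 3 : ℕ) : ℕ∞) ∧
    2 * tsPeb (pathGraph (4 * k + 2))
        {unitDist 1 (⟨0, by omega⟩ : Fin (4 * k + 2)),
         unitDist 1 (⟨4 * k + 1, by omega⟩ : Fin (4 * k + 2))}
      = (((2 ^ (2 * k + 3) - 2) / 3 : ℕ) : ℕ∞) ∧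
    2 * tsPeb (pathGraph (4 * k + 2))
        {unitDist 1 (⟨0, by omega⟩ : Fin (4 * k + 2)),
         unitDist 1 (⟨4 * k + 1, by omega⟩ : Fin (4 * k + 2))}
      < tsPeb (pathGraph (4 * k + 2))
        {unitDist 2 (⟨0, by omega⟩ : Fin (4 * k + 2)),
         unitDist 2 (⟨4 * k + 1, by omega⟩ : Fin (4 * k + 2))} := by
  obtain ⟨c, hc⟩ := exists_c k
  obtain ⟨d, hd⟩ := exists_d k
  obtain ⟨b, hb⟩ := exists_b k hk
  have e3 : (2:ℕ) ^ (2 * k + 3) = 2 * 2 ^ (2 * k + 2) := by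
    rw [show 2 * k + 3 = (2 * k + 2) + 1 by ring, pow_succ]
    ring
  have h2 := tsPeb2 k c hk hc
  have h1 := tsPeb1 k c d b hk hc hd hb
  have hv2 : ((2 ^ (2 * k + 3) + 1) / 3 : ℕ) = 2 * c + 1 := by omega
  have hv1 : ((2 ^ (2 * k + 3) - 2) / 3 : ℕ) = 2 * c := by omega
  have hcast : (2 : ℕ∞) * ((c : ℕ) : ℕ∞) = ((2 * c : ℕ) : ℕ∞) := by push_cast; ring
  refine ⟨?_, ?_, ?_⟩
  · rw [h2, hv2]
  · rw [h1, hv1, hcast]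
  · rw [h1, h2, hcast]
    rw [Nat.cast_lt]
    omega
end
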